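/- Let q ∈ I := (−∞,0) ∪ (1,∞). If (β,Y) ∈ A_q and (β′,Y′) ∈ A_q both minimize k_q over A_q, then cβ = cβ′ and Y = Y′ K-almost everywhere. -/

import Mathlib

open MeasureTheory
open scoped ENNReal RealInnerProductSpace

noncomputable section

/-- `ℝ^d` with the Euclidean norm. -/
abbrev E (d : ℕ) := EuclideanSpace ℝ (Fin d)

/-- The truncation function `h(x) = x · 1_{‖x‖ ≤ 1}`. -/
def trunc {d : ℕ} (x : E d) : E d := if ‖x‖ ≤ 1 then x else 0

/-- Action of a `d × d` matrix on a vector of `ℝ^d`. -/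
def mv {d : ℕ} (c : Matrix (Fin d) (Fin d) ℝ) (v : E d) : E d :=
  (WithLp.equiv 2 (Fin d → ℝ)).symm (c.mulVec (WithLp.equiv 2 (Fin d → ℝ) v))

/-- `K` is a Lévy measure: `K({0}) = 0` and `∫ min(1,‖x‖²) K(dx) < ∞`. -/
def IsLevyMeasure {d : ℕ} (K : Measure (E d)) : Prop :=
  K {0} = 0 ∧ ∫⁻ x, ENNReal.ofReal (min 1 (‖x‖ ^ 2)) ∂K < ⊤

/-- `g_q(y) = y^q - 1 - q(y-1)` (real exponent `q`). -/
def gq (q y : ℝ) : ℝ := y ^ q - 1 - q * (y - 1)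

/-- `k_q(β, Y) = (q(q-1)/2) βᵀcβ + ∫ g_q(Y(x)) K(dx)`. -/
def kq {d : ℕ} (q : ℝ) (c : Matrix (Fin d) (Fin d) ℝ) (K : Measure (E d))
    (β : E d) (Y : E d → ℝ) : ℝ :=
  q * (q - 1) / 2 * ⟪β, mv c β⟫ + ∫ x, gq q (Y x) ∂K

/-- The martingale condition `(M)`:
`∫ ‖x Y(x) - h(x)‖ K(dx) < ∞` and `b + cβ + ∫ (x Y(x) - h(x)) K(dx) = 0`. -/
def MCond {d : ℕ} (b : E d) (c : Matrix (Fin d) (Fin d) ℝ) (K : Measure (E d))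
    (β : E d) (Y : E d → ℝ) : Prop :=
  Integrable (fun x => Y x • x - trunc x) K ∧
  b + mv c β + ∫ x, (Y x • x - trunc x) ∂K = 0

/-- Membership in the admissible set `A_q`: `Y` is measurable, `Y > 0` `K`-a.e.
(recall that functions which agree `K`-a.e. are identified), `(β,Y)` satisfies the
martingale condition `(M)`, and `∫ g_q(Y(x)) K(dx) < ∞`, i.e. `k_q(β,Y) < ∞`. -/
def memA {d : ℕ} (q : ℝ) (b : E d) (c : Matrix (Fin d) (Fin d) ℝ)
    (K : Measure (E d)) (β : E d) (Y : E d → ℝ) : Prop :=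
  Measurable Y ∧ (∀ᵐ x ∂K, 0 < Y x) ∧ MCond b c K β Y ∧
  ∫⁻ x, ENNReal.ofReal (gq q (Y x)) ∂K < ⊤

lemma rpow_sc {q : ℝ} (hq : q < 0 ∨ 1 < q) :
    StrictConvexOn ℝ (Set.Ioi 0) fun y : ℝ => y ^ q := by
  rcases hq with hq | hq
  · apply strictConvexOn_of_deriv2_pos (convex_Ioi 0)
    · intro y hy
      exact (Real.continuousAt_rpow_const y q (Or.inl (ne_of_gt hy))).continuousWithinAt
    · intro y hy
      rw [interior_Ioi] at hy
      have hev : deriv (fun z : ℝ => z ^ q) =ᶠ[nhds y] fun z => q * z ^ (q - 1) := by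
        filter_upwards [isOpen_Ioi.eventually_mem hy] with z hz
        exact (Real.hasDerivAt_rpow_const (Or.inl (ne_of_gt hz))).deriv
      have h2 : deriv^[2] (fun z : ℝ => z ^ q) y
          = deriv (fun z : ℝ => q * z ^ (q - 1)) y := by
        simp only [Function.iterate_succ, Function.iterate_zero, Function.comp_apply, id]
        exact hev.deriv_eq
      have hd : HasDerivAt (fun z : ℝ => q * z ^ (q - 1)) (q * ((q - 1) * y ^ (q - 1 - 1))) y :=
        (Real.hasDerivAt_rpow_const (Or.inl (ne_of_gt hy))).const_mul q
      rw [h2, hd.deriv]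
      have ht := Real.rpow_pos_of_pos hy (q - 1 - 1)
      have h3 : 0 < q * (q - 1) := mul_pos_of_neg_of_neg hq (by linarith)
      calc (0:ℝ) < q * (q - 1) * y ^ (q - 1 - 1) := mul_pos h3 ht
        _ = q * ((q - 1) * y ^ (q - 1 - 1)) := by ring
  · exact (strictConvexOn_rpow hq).subset Set.Ioi_subset_Ici_self (convex_Ioi 0)

lemma gq_nonneg {q : ℝ} (hq : q < 0 ∨ 1 < q) {y : ℝ} (hy : 0 < y) : 0 ≤ gq q y := by
  have hsc := (rpow_sc hq).convexOn
  have hd : HasDerivAt (fun z : ℝ => z ^ q) q 1 := by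
    simpa using Real.hasDerivAt_rpow_const (x := (1:ℝ)) (p := q) (Or.inl one_ne_zero)
  rcases lt_trichotomy y 1 with h | h | h
  · have hs := hsc.slope_le_of_hasDerivAt hy (by norm_num : (1:ℝ) ∈ Set.Ioi 0) h hd
    rw [slope_def_field] at hs
    simp only [Real.one_rpow] at hs
    have h1 : (0:ℝ) < 1 - y := by linarith
    have := (div_le_iff₀ h1).1 hs
    unfold gq; nlinarith
  · simp [h, gq]
  · have hs := hsc.le_slope_of_hasDerivAt (by norm_num : (1:ℝ) ∈ Set.Ioi 0) (Set.mem_Ioi.2 (by linarith)) h hd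
    rw [slope_def_field] at hs
    simp only [Real.one_rpow] at hs
    have h1 : (0:ℝ) < y - 1 := by linarith
    have := (le_div_iff₀ h1).1 hs
    unfold gq; nlinarith

lemma gq_mid_lt {q : ℝ} (hq : q < 0 ∨ 1 < q) {y y' : ℝ} (hy : 0 < y) (hy' : 0 < y')
    (hne : y ≠ y') : gq q ((y + y') / 2) < (gq q y + gq q y') / 2 := by
  have h := (rpow_sc hq).2 hy hy' hne (by norm_num : (0:ℝ) < 1/2) (by norm_num : (0:ℝ) < 1/2)
    (by norm_num)
  simp only [smul_eq_mul] at h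
  have he : (1/2:ℝ) * y + (1/2) * y' = (y + y') / 2 := by ring
  rw [he] at h
  unfold gq; linarith

lemma gq_mid_le {q : ℝ} (hq : q < 0 ∨ 1 < q) {y y' : ℝ} (hy : 0 < y) (hy' : 0 < y') :
    gq q ((y + y') / 2) ≤ (gq q y + gq q y') / 2 := by
  rcases eq_or_ne y y' with rfl | hne
  · have : (y + y) / 2 = y := by ring
    rw [this]; ring_nf; exact le_refl _
  · exact (gq_mid_lt hq hy hy' hne).le

lemma mv_add {d : ℕ} (c : Matrix (Fin d) (Fin d) ℝ) (u v : E d) :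
    mv c (u + v) = mv c u + mv c v := by
  simp [mv, Matrix.mulVec_add]

lemma mv_smul {d : ℕ} (c : Matrix (Fin d) (Fin d) ℝ) (r : ℝ) (u : E d) :
    mv c (r • u) = r • mv c u := by
  simp [mv, Matrix.mulVec_smul]

lemma inner_mv {d : ℕ} (c : Matrix (Fin d) (Fin d) ℝ) (u v : E d) :
    ⟪u, mv c v⟫ = dotProduct (WithLp.equiv 2 (Fin d → ℝ) u)
      (c.mulVec (WithLp.equiv 2 (Fin d → ℝ) v)) := by
  simp [mv, PiLp.inner_apply, RCLike.inner_apply, dotProduct, mul_comm]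

lemma inner_mv_symm {d : ℕ} (c : Matrix (Fin d) (Fin d) ℝ) (hsym : c.IsSymm) (u v : E d) :
    ⟪u, mv c v⟫ = ⟪v, mv c u⟫ := by
  rw [inner_mv, inner_mv, Matrix.dotProduct_mulVec, ← Matrix.mulVec_transpose, hsym.eq]
  exact dotProduct_comm _ _

set_option maxHeartbeats 1000000 in
/-- **Uniqueness of the minimizer of `(P_q)`**: if `(β,Y)` and `(β',Y')` both
minimize `k_q` over `A_q`, then `cβ = cβ'` and `Y = Y'` `K`-a.e. -/
theorem stmt1 (d : ℕ) (hd : 1 ≤ d) (q : ℝ) (hq : q < 0 ∨ 1 < q)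
    (b : E d) (c : Matrix (Fin d) (Fin d) ℝ) (hsym : c.IsSymm) (hpsd : c.PosSemidef)
    (K : Measure (E d)) (hK : IsLevyMeasure K)
    (β : E d) (Y : E d → ℝ) (β' : E d) (Y' : E d → ℝ)
    (hmem : memA q b c K β Y) (hmem' : memA q b c K β' Y')
    (hmin : ∀ β'' Y'', memA q b c K β'' Y'' → kq q c K β Y ≤ kq q c K β'' Y'')
    (hmin' : ∀ β'' Y'', memA q b c K β'' Y'' → kq q c K β' Y' ≤ kq q c K β'' Y'') :
    mv c β = mv c β' ∧ ∀ᵐ x ∂K, Y x = Y' x := by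
  obtain ⟨hYmeas, hYpos, ⟨hInt, hM⟩, hgfin⟩ := hmem
  obtain ⟨hY'meas, hY'pos, ⟨hInt', hM'⟩, hgfin'⟩ := hmem'
  -- measurability of gq ∘ Z
  have hmeas_gq : ∀ (Z : E d → ℝ), Measurable Z → Measurable fun x => gq q (Z x) := by
    intro Z hZ
    unfold gq
    exact ((hZ.pow measurable_const).sub measurable_const).sub
      (measurable_const.mul (hZ.sub measurable_const))
  have hint_of : ∀ (Z : E d → ℝ), Measurable Z → (∀ᵐ x ∂K, 0 < Z x) →
      (∫⁻ x, ENNReal.ofReal (gq q (Z x)) ∂K < ⊤) →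
      Integrable (fun x => gq q (Z x)) K := by
    intro Z hZ hpos hfin
    refine ⟨(hmeas_gq Z hZ).aestronglyMeasurable, ?_⟩
    rw [hasFiniteIntegral_iff_ofReal (hpos.mono fun x hx => gq_nonneg hq hx)]
    exact hfin
  have hf_int : Integrable (fun x => gq q (Y x)) K := hint_of Y hYmeas hYpos hgfin
  have hf'_int : Integrable (fun x => gq q (Y' x)) K := hint_of Y' hY'meas hY'pos hgfin'
  have hYm_meas : Measurable fun x => (Y x + Y' x) / 2 := (hYmeas.add hY'meas).div_const 2
  have hYmpos : ∀ᵐ x ∂K, 0 < (Y x + Y' x) / 2 := by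
    filter_upwards [hYpos, hY'pos] with x h1 h2
    have : (0:ℝ) < Y x + Y' x := by linarith
    linarith
  have hfm_le : ∀ᵐ x ∂K, gq q ((Y x + Y' x) / 2) ≤ (gq q (Y x) + gq q (Y' x)) / 2 := by
    filter_upwards [hYpos, hY'pos] with x h1 h2
    exact gq_mid_le hq h1 h2
  have hfm_nonneg : ∀ᵐ x ∂K, 0 ≤ gq q ((Y x + Y' x) / 2) := by
    filter_upwards [hYmpos] with x h1
    exact gq_nonneg hq h1
  have hbound : Integrable (fun x => (gq q (Y x) + gq q (Y' x)) / 2) K :=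
    (hf_int.add hf'_int).div_const 2
  have hfm_int : Integrable (fun x => gq q ((Y x + Y' x) / 2)) K := by
    refine hbound.mono' (hmeas_gq _ hYm_meas).aestronglyMeasurable ?_
    filter_upwards [hfm_nonneg, hfm_le] with x h1 h2
    rw [Real.norm_eq_abs, abs_of_nonneg h1]
    exact h2
  -- midpoint admissibility
  have heq_fun : (fun x => ((Y x + Y' x) / 2) • x - trunc x)
      = fun x => (2⁻¹:ℝ) • ((Y x • x - trunc x) + (Y' x • x - trunc x)) := by
    funext x
    rw [div_eq_inv_mul]
    module
  have hIntm : Integrable (fun x => ((Y x + Y' x) / 2) • x - trunc x) K := by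
    rw [heq_fun]
    exact (hInt.add hInt').smul (2⁻¹:ℝ)
  have hintegral_m : ∫ x, (((Y x + Y' x) / 2) • x - trunc x) ∂K
      = (2⁻¹:ℝ) • ((∫ x, (Y x • x - trunc x) ∂K) + ∫ x, (Y' x • x - trunc x) ∂K) := by
    rw [heq_fun, integral_smul, integral_add hInt hInt']
  have hmv_m : mv c ((2⁻¹:ℝ) • (β + β')) = (2⁻¹:ℝ) • (mv c β + mv c β') := by
    rw [mv_smul, mv_add]
  have hMm : b + mv c ((2⁻¹:ℝ) • (β + β'))
      + ∫ x, (((Y x + Y' x) / 2) • x - trunc x) ∂K = 0 := by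
    rw [hintegral_m, hmv_m]
    have hkey : b + (2⁻¹:ℝ) • (mv c β + mv c β')
        + (2⁻¹:ℝ) • ((∫ x, (Y x • x - trunc x) ∂K) + ∫ x, (Y' x • x - trunc x) ∂K)
        = (2⁻¹:ℝ) • ((b + mv c β + ∫ x, (Y x • x - trunc x) ∂K)
          + (b + mv c β' + ∫ x, (Y' x • x - trunc x) ∂K)) := by module
    rw [hkey, hM, hM', add_zero, smul_zero]
  have hlintm : ∫⁻ x, ENNReal.ofReal (gq q ((Y x + Y' x) / 2)) ∂K < ⊤ := by
    have hle : ∀ᵐ x ∂K, ENNReal.ofReal (gq q ((Y x + Y' x) / 2))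
        ≤ ENNReal.ofReal (gq q (Y x)) + ENNReal.ofReal (gq q (Y' x)) := by
      filter_upwards [hYpos, hY'pos] with x h1 h2
      have g1 := gq_nonneg hq h1
      have g2 := gq_nonneg hq h2
      calc ENNReal.ofReal (gq q ((Y x + Y' x) / 2))
          ≤ ENNReal.ofReal ((gq q (Y x) + gq q (Y' x)) / 2) :=
            ENNReal.ofReal_le_ofReal (gq_mid_le hq h1 h2)
        _ ≤ ENNReal.ofReal (gq q (Y x) + gq q (Y' x)) :=
            ENNReal.ofReal_le_ofReal (by linarith)
        _ ≤ ENNReal.ofReal (gq q (Y x)) + ENNReal.ofReal (gq q (Y' x)) :=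
            ENNReal.ofReal_add_le
    calc ∫⁻ x, ENNReal.ofReal (gq q ((Y x + Y' x) / 2)) ∂K
        ≤ ∫⁻ x, (ENNReal.ofReal (gq q (Y x)) + ENNReal.ofReal (gq q (Y' x))) ∂K :=
          lintegral_mono_ae hle
      _ = (∫⁻ x, ENNReal.ofReal (gq q (Y x)) ∂K)
          + ∫⁻ x, ENNReal.ofReal (gq q (Y' x)) ∂K :=
          lintegral_add_left (hmeas_gq Y hYmeas).ennreal_ofReal _
      _ < ⊤ := ENNReal.add_lt_top.2 ⟨hgfin, hgfin'⟩
  have hmemm : memA q b c K ((2⁻¹:ℝ) • (β + β')) (fun x => (Y x + Y' x) / 2) :=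
    ⟨hYm_meas, hYmpos, ⟨hIntm, hMm⟩, hlintm⟩
  -- quadratic form identities
  have hS : ⟪β, mv c β'⟫ = ⟪β', mv c β⟫ := inner_mv_symm c hsym β β'
  have hmv_sub : mv c (β - β') = mv c β - mv c β' := by
    have h1 : β - β' = β + (-1:ℝ) • β' := by module
    rw [h1, mv_add, mv_smul]
    module
  have hQm : ⟪(2⁻¹:ℝ) • (β + β'), mv c ((2⁻¹:ℝ) • (β + β'))⟫
      = (⟪β, mv c β⟫ + ⟪β', mv c β'⟫) / 2 - ⟪β - β', mv c (β - β')⟫ / 4 := by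
    rw [hmv_m, hmv_sub]
    simp only [inner_add_left, inner_add_right, inner_sub_left, inner_sub_right,
      real_inner_smul_left, real_inner_smul_right]
    linarith [hS]
  have hQD_nonneg : 0 ≤ ⟪β - β', mv c (β - β')⟫ := by
    rw [inner_mv]
    simpa using hpsd.dotProduct_mulVec_nonneg (WithLp.equiv 2 (Fin d → ℝ) (β - β'))
  have hqq : 0 < q * (q - 1) := by rcases hq with h | h <;> nlinarith
  -- integral of the convexity deficit
  have hD_int : Integrable
      (fun x => (gq q (Y x) + gq q (Y' x)) / 2 - gq q ((Y x + Y' x) / 2)) K :=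
    hbound.sub hfm_int
  have hD_nonneg : ∀ᵐ x ∂K,
      0 ≤ (gq q (Y x) + gq q (Y' x)) / 2 - gq q ((Y x + Y' x) / 2) := by
    filter_upwards [hfm_le] with x hx
    linarith
  have hID_nonneg : 0 ≤ ∫ x,
      ((gq q (Y x) + gq q (Y' x)) / 2 - gq q ((Y x + Y' x) / 2)) ∂K :=
    integral_nonneg_of_ae hD_nonneg
  have h_int_split : ∫ x,
      ((gq q (Y x) + gq q (Y' x)) / 2 - gq q ((Y x + Y' x) / 2)) ∂K
      = ((∫ x, gq q (Y x) ∂K) + ∫ x, gq q (Y' x) ∂K) / 2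
        - ∫ x, gq q ((Y x + Y' x) / 2) ∂K := by
    rw [integral_sub hbound hfm_int]
    congr 1
    rw [integral_div, integral_add hf_int hf'_int]
  -- value of kq at midpoint
  have hkq' : kq q c K β' Y' = kq q c K β Y :=
    le_antisymm (hmin' β Y ⟨hYmeas, hYpos, ⟨hInt, hM⟩, hgfin⟩)
      (hmin β' Y' ⟨hY'meas, hY'pos, ⟨hInt', hM'⟩, hgfin'⟩)
  have hkm : kq q c K ((2⁻¹:ℝ) • (β + β')) (fun x => (Y x + Y' x) / 2)
      = (kq q c K β Y + kq q c K β' Y') / 2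
        - (q * (q - 1) / 2 * (⟪β - β', mv c (β - β')⟫ / 4)
          + ∫ x, ((gq q (Y x) + gq q (Y' x)) / 2 - gq q ((Y x + Y' x) / 2)) ∂K) := by
    simp only [kq]
    rw [hQm, h_int_split]
    ring
  have hle := hmin _ _ hmemm
  rw [hkm, hkq'] at hle
  have hsum_le : q * (q - 1) / 2 * (⟪β - β', mv c (β - β')⟫ / 4)
      + ∫ x, ((gq q (Y x) + gq q (Y' x)) / 2 - gq q ((Y x + Y' x) / 2)) ∂K ≤ 0 := by
    linarith
  have hterm1_nonneg : 0 ≤ q * (q - 1) / 2 * (⟪β - β', mv c (β - β')⟫ / 4) := by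
    have : (0:ℝ) < q * (q - 1) / 2 := by linarith
    positivity
  have hQD_zero : ⟪β - β', mv c (β - β')⟫ = 0 := by
    have h1 : q * (q - 1) / 2 * (⟪β - β', mv c (β - β')⟫ / 4) = 0 := by linarith
    have h2 : (0:ℝ) < q * (q - 1) / 2 := by linarith
    rcases mul_eq_zero.1 h1 with h | h
    · linarith
    · linarith
  have hID_zero : ∫ x,
      ((gq q (Y x) + gq q (Y' x)) / 2 - gq q ((Y x + Y' x) / 2)) ∂K = 0 := by
    linarith
  constructor
  · -- cβ = cβ'
    have hv : c.mulVec (WithLp.equiv 2 (Fin d → ℝ) (β - β')) = 0 := by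
      rw [inner_mv] at hQD_zero
      have := (hpsd.dotProduct_mulVec_zero_iff (WithLp.equiv 2 (Fin d → ℝ) (β - β'))).1
      apply this
      simpa using hQD_zero
    have : mv c (β - β') = 0 := by
      unfold mv
      rw [hv]
      simp
    rw [hmv_sub] at this
    linear_combination (norm := module) this
  · -- Y = Y' a.e.
    have hae := (integral_eq_zero_iff_of_nonneg_ae hD_nonneg hD_int).1 hID_zero
    rw [Filter.EventuallyEq] at hae
    filter_upwards [hae, hYpos, hY'pos] with x h0 h1 h2
    by_contra hne
    have := gq_mid_lt hq h1 h2 hne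
    simp only [Pi.zero_apply] at h0
    linarith
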